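/- Let 𝔲 be a real Lie algebra with a decomposition 𝔲 = 𝔨 ⊕ 𝔟 as a direct sum of vector subspaces where 𝔨 and 𝔟 are Lie subalgebras. Let L̃ be the Lie algebra of Laurent polynomial loops Σ_{j ≤ n₀} ξⱼλʲ with coefficients in 𝔲, let σ be an involutive automorphism of 𝔲 extended to loops by (σ̂ξ)(λ) = σ(ξ(λ⁻¹)), let L̃₊ be the fixed set of σ̂ in L̃, and let L̃₋ = {Σ_{j≤0} ξⱼλʲ : ξ₀ ∈ 𝔟}. Then L̃ = L̃₊ ⊕ L̃₋ as vector spaces, and explicitly, for A(λ) = Σ_{j ≤ n₀} Aⱼλʲ, π₊(A) = (A₀)_𝔨 + Σ_{j>0}(Aⱼλʲ + σ(Aⱼ)λ⁻ʲ) and π₋(A) = (A₀)_𝔟 + Σ_{j>0}(A₋ⱼ − σ(Aⱼ))λ⁻ʲ, where (A₀)_𝔨, (A₀)_𝔟 are the components of A₀ with respect to 𝔲 = 𝔨 ⊕ 𝔟. -/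

import Mathlib

/-- Twisted splitting of the loop algebra of 𝔲 = 𝔨 ⊕ 𝔟.
Loops are represented by their finitely supported Laurent coefficients c : ℤ →₀ 𝔲
(with c j = 0 for j > n₀).  L̃₊ is the fixed set of σ̂ (coefficientwise: σ(ξⱼ) = ξ₋ⱼ),
L̃₋ consists of loops with only nonpositive powers and constant term in 𝔟.
Then every A splits uniquely as A = ξ + η with ξ ∈ L̃₊, η ∈ L̃₋, and the projections
are given by the explicit formulas
π₊(A) = (A₀)_𝔨 + Σ_{j>0}(Aⱼλʲ + σ(Aⱼ)λ⁻ʲ),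
π₋(A) = (A₀)_𝔟 + Σ_{j>0}(A₋ⱼ − σ(Aⱼ))λ⁻ʲ. -/
theorem twisted_U_hierarchy_splitting
    {u : Type*} [LieRing u] [LieAlgebra ℝ u]
    (𝔨 𝔟 : LieSubalgebra ℝ u)
    (hcompl : ∀ x : u, ∃! p : u × u, p.1 ∈ 𝔨 ∧ p.2 ∈ 𝔟 ∧ x = p.1 + p.2)
    (σ : u →ₗ[ℝ] u) (hinv : ∀ x, σ (σ x) = x)
    (hbr : ∀ x y : u, σ ⁅x, y⁆ = ⁅σ x, σ y⁆)
    (hfix : ∀ x : u, σ x = x ↔ x ∈ 𝔨)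
    (n₀ : ℤ) (A : ℤ →₀ u) (hA : ∀ j : ℤ, n₀ < j → A j = 0)
    (k0 b0 : u) (hk0 : k0 ∈ 𝔨) (hb0 : b0 ∈ 𝔟) (h0 : A 0 = k0 + b0) :
    -- direct sum decomposition L̃ = L̃₊ ⊕ L̃₋
    (∃! p : (ℤ →₀ u) × (ℤ →₀ u),
      (∀ j : ℤ, σ (p.1 j) = p.1 (-j)) ∧
      (∀ j : ℤ, 0 < j → p.2 j = 0) ∧ p.2 0 ∈ 𝔟 ∧ A = p.1 + p.2) ∧
    -- explicit formulas for the projections π₊ and π₋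
    (∀ ξ η : ℤ →₀ u,
      (∀ j : ℤ, σ (ξ j) = ξ (-j)) →
      (∀ j : ℤ, 0 < j → η j = 0) → η 0 ∈ 𝔟 → A = ξ + η →
      (∀ j : ℤ, 0 < j → ξ j = A j) ∧
      (∀ j : ℤ, j < 0 → ξ j = σ (A (-j))) ∧
      ξ 0 = k0 ∧
      (∀ j : ℤ, j < 0 → η j = A j - σ (A (-j))) ∧
      η 0 = b0) := by
  have hσ0 : σ 0 = 0 := map_zero σ
  have key : ∀ ξ η : ℤ →₀ u,
      (∀ j : ℤ, σ (ξ j) = ξ (-j)) →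
      (∀ j : ℤ, 0 < j → η j = 0) → η 0 ∈ 𝔟 → A = ξ + η →
      (∀ j : ℤ, 0 < j → ξ j = A j) ∧
      (∀ j : ℤ, j < 0 → ξ j = σ (A (-j))) ∧
      ξ 0 = k0 ∧
      (∀ j : ℤ, j < 0 → η j = A j - σ (A (-j))) ∧
      η 0 = b0 := by
    intro ξ η hξ hη hη0 hsum
    have hAj : ∀ j, A j = ξ j + η j := by intro j; rw [hsum]; simp
    have hpos : ∀ j : ℤ, 0 < j → ξ j = A j := by
      intro j hj; rw [hAj j, hη j hj, add_zero]
    have hneg : ∀ j : ℤ, j < 0 → ξ j = σ (A (-j)) := by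
      intro j hj
      have h := hξ (-j)
      rw [neg_neg] at h
      rw [← h, hpos (-j) (by omega)]
    have hk : ξ 0 ∈ 𝔨 := (hfix _).mp (by simpa using hξ 0)
    have h1 := (hcompl (A 0)).unique (y₁ := (ξ 0, η 0)) (y₂ := (k0, b0))
      ⟨hk, hη0, hAj 0⟩ ⟨hk0, hb0, h0⟩
    have hξ0 : ξ 0 = k0 := congrArg Prod.fst h1
    have hη0' : η 0 = b0 := congrArg Prod.snd h1
    refine ⟨hpos, hneg, hξ0, ?_, hη0'⟩
    intro j hj
    rw [hAj j, hneg j hj]; abel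
  set ξ : ℤ →₀ u := A.filter (fun j => 0 < j)
      + Finsupp.equivMapDomain (Equiv.neg ℤ)
          (Finsupp.mapRange σ hσ0 (A.filter (fun j => 0 < j)))
      + Finsupp.single 0 k0 with hξdef
  have hξval : ∀ j : ℤ, ξ j =
      (if 0 < j then A j else 0) + (if 0 < -j then σ (A (-j)) else 0)
      + (if j = 0 then k0 else 0) := by
    intro j
    simp only [hξdef, Finsupp.add_apply, Finsupp.filter_apply,
      Finsupp.equivMapDomain_apply, Finsupp.mapRange_apply, Finsupp.single_apply,
      Equiv.neg_symm, Equiv.neg_apply, neg_neg]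
    by_cases h3 : j = 0
    · subst h3; simp
    · have h3' : ¬ (0 = j) := fun h => h3 h.symm
      by_cases h1 : 0 < j <;> by_cases h2 : j < 0 <;> simp [h1, h2, h3, h3']
  set η : ℤ →₀ u := A - ξ with hηdef
  have hηval : ∀ j : ℤ, η j = A j - ξ j := by intro j; simp [hηdef]
  have hξfix : ∀ j : ℤ, σ (ξ j) = ξ (-j) := by
    intro j
    rcases lt_trichotomy j 0 with hj | hj | hj
    · rw [hξval j, hξval (-j)]
      have h1 : ¬ (0 < j) := by omega
      have h2 : 0 < -j := by omega
      have h3 : j ≠ 0 := by omega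
      have h4 : ¬ (0 < -(-j)) := by omega
      have h5 : ¬ ((-j) = 0) := by omega
      simp [hj, h1, h2, h3, h4, h5, hinv, neg_neg]
    · subst hj
      simp only [neg_zero]
      rw [hξval 0]
      simp [(hfix k0).mpr hk0]
    · rw [hξval j, hξval (-j)]
      have h1 : ¬ (0 < -j) := by omega
      have h2 : j ≠ 0 := by omega
      have h3 : 0 < -(-j) := by omega
      have h4 : ¬ (0 < -j) := by omega
      have h5 : ¬ ((-j) = 0) := by omega
      simp [hj, h1, h2, h3, h4, h5, neg_neg, show ¬ j < 0 by omega]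
  have hηpos : ∀ j : ℤ, 0 < j → η j = 0 := by
    intro j hj
    rw [hηval j, hξval j]
    have h2 : ¬ (0 < -j) := by omega
    have h3 : j ≠ 0 := by omega
    simp [hj, h2, h3, show ¬ j < 0 by omega]
  have hη0 : η 0 = b0 := by
    rw [hηval 0, hξval 0, h0]; simp
  have hsum : A = ξ + η := by
    rw [hηdef]; abel
  constructor
  · refine ⟨(ξ, η), ⟨hξfix, hηpos, hη0 ▸ hb0, hsum⟩, ?_⟩
    rintro ⟨ξ', η'⟩ ⟨h₁, h₂, h₃, h₄⟩
    obtain ⟨p1, p2, p3, p4, p5⟩ := key ξ' η' h₁ h₂ h₃ h₄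
    obtain ⟨q1, q2, q3, q4, q5⟩ := key ξ η hξfix hηpos (hη0 ▸ hb0) hsum
    have hξeq : ξ' = ξ := by
      ext j
      rcases lt_trichotomy j 0 with hj | hj | hj
      · rw [p2 j hj, q2 j hj]
      · subst hj; rw [p3, q3]
      · rw [p1 j hj, q1 j hj]
    have hηeq : η' = η := by
      ext j
      rcases lt_trichotomy j 0 with hj | hj | hj
      · rw [p4 j hj, q4 j hj]
      · subst hj; rw [p5, q5]
      · rw [h₂ j hj, hηpos j hj]
    exact Prod.ext hξeq hηeq
  · exact key
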